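/- Every incompatible collection is detected by some guessing game: Let Y, T be finite sets, let X = Y × T, and let υ : X → Y and τ : X → T be the coordinate projections. Define the score function f_υ(x,y) = δ_{υ(x),y} and the partial information map α_τ(t | x) = δ_{τ(x),t}. Then for every incompatible collection (N_t)_{t∈T} of measurements with outcome set Y on a finite-dimensional complex Hilbert space ℋ, there exists a state ensemble 𝓔 with label set X such that E^prior_{f_υ,α_τ}(𝓔; (N_t)) > E^post_{f_υ,α_τ}(𝓔). -/

import Mathlib

open scoped BigOperators
open Matrix
open scoped ComplexOrder

noncomputable section

abbrev Mat (d : ℕ) := Matrix (Fin d) (Fin d) ℂ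

def IsStateEnsemble {d : ℕ} {X : Type*} [Fintype X] (E : X → Mat d) : Prop :=
  (∀ x, (E x).PosSemidef) ∧ (∑ x, (E x).trace) = 1

def IsMeasurement {d : ℕ} {Z : Type*} [Fintype Z] (M : Z → Mat d) : Prop :=
  (∀ z, (M z).PosSemidef) ∧ (∑ z, M z) = 1

def IsScore {X Y : Type*} (f : X → Y → ℝ) : Prop :=
  ∀ x y, 0 ≤ f x y ∧ f x y ≤ 1

def IsPartialInfo {T X : Type*} [Fintype T] (α : T → X → ℝ) : Prop :=
  (∀ t x, 0 ≤ α t x) ∧ ∀ x, (∑ t, α t x) = 1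

def IsPostProc {T Y Z : Type*} [Fintype Y] (ν : T → Y → Z → ℝ) : Prop :=
  (∀ t y z, 0 ≤ ν t y z) ∧ ∀ t z, (∑ y, ν t y z) = 1

def Pg {d : ℕ} {X : Type*} [Fintype X] (E M : X → Mat d) : ℝ :=
  ∑ x, ((E x) * (M x)).trace.re

def PgMax {d : ℕ} {X : Type*} [Fintype X] (E : X → Mat d) : ℝ :=
  sSup {p : ℝ | ∃ M : X → Mat d, IsMeasurement M ∧ p = Pg E M}

def Escore {d : ℕ} {X Y : Type*} [Fintype X] [Fintype Y]
    (f : X → Y → ℝ) (E : X → Mat d) (M : Y → Mat d) : ℝ :=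
  ∑ x, ∑ y, f x y * ((E x) * (M y)).trace.re

def EMax {d : ℕ} {X Y : Type*} [Fintype X] [Fintype Y]
    (f : X → Y → ℝ) (E : X → Mat d) : ℝ :=
  sSup {p : ℝ | ∃ M : Y → Mat d, IsMeasurement M ∧ p = Escore f E M}

def Epost {d : ℕ} {X Y T Z : Type*} [Fintype X] [Fintype Y] [Fintype T] [Fintype Z]
    (f : X → Y → ℝ) (α : T → X → ℝ) (E : X → Mat d)
    (M : Z → Mat d) (ν : T → Y → Z → ℝ) : ℝ :=
  ∑ x, ∑ y, ∑ t, ∑ z, f x y * α t x * ν t y z * ((E x) * (M z)).trace.re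

def EpostMax {d : ℕ} {X Y T : Type*} [Fintype X] [Fintype Y] [Fintype T]
    (f : X → Y → ℝ) (α : T → X → ℝ) (E : X → Mat d) : ℝ :=
  sSup {p : ℝ | ∃ (n : ℕ) (M : Fin n → Mat d) (ν : T → Y → Fin n → ℝ),
    IsMeasurement M ∧ IsPostProc ν ∧ p = Epost f α E M ν}

def Eprior {d : ℕ} {X Y T : Type*} [Fintype X] [Fintype Y] [Fintype T]
    (f : X → Y → ℝ) (α : T → X → ℝ) (E : X → Mat d) (N : T → Y → Mat d) : ℝ :=
  ∑ x, ∑ y, ∑ t, f x y * α t x * ((E x) * (N t y)).trace.re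

def EpriorMax {d : ℕ} {X Y T : Type*} [Fintype X] [Fintype Y] [Fintype T]
    (f : X → Y → ℝ) (α : T → X → ℝ) (E : X → Mat d) : ℝ :=
  sSup {p : ℝ | ∃ N : T → Y → Mat d, (∀ t, IsMeasurement (N t)) ∧ p = Eprior f α E N}

def IsCompatible {d : ℕ} {T Y : Type*} [Fintype T] [Fintype Y] (N : T → Y → Mat d) : Prop :=
  ∃ (n : ℕ) (M : Fin n → Mat d) (ν : T → Y → Fin n → ℝ),
    IsMeasurement M ∧ IsPostProc ν ∧ ∀ t y, N t y = ∑ z, ν t y z • M z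

def stdPost {T Y : Type*} [DecidableEq Y] : T → Y → (T → Y) → ℝ :=
  fun t y φ => if y = φ t then 1 else 0

def Δconst {d : ℕ} {X Y : Type*} [Fintype X] [Fintype Y]
    (f : X → Y → ℝ) (E : X → Mat d) : ℝ :=
  ∑ x, ∑ y, f x y * (E x).trace.re

def auxEns {d : ℕ} {X Y : Type*} [Fintype X] [Fintype Y]
    (f : X → Y → ℝ) (E : X → Mat d) (y : Y) : Mat d :=
  (Δconst f E)⁻¹ • ∑ x, f x y • E x

def auxEnsPost {d : ℕ} {X Y T : Type*} [Fintype X] [Fintype Y] [Fintype T]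
    (f : X → Y → ℝ) (α : T → X → ℝ) (E : X → Mat d) (φ : T → Y) : Mat d :=
  ((Fintype.card Y : ℝ) ^ (Fintype.card T - 1) * Δconst f E)⁻¹ •
    ∑ x, ∑ t, (f x (φ t) * α t x) • E x

section Aux
open Finset

variable {d : ℕ}

/-- real pairing -/
def tpair (A B : Mat d) : ℝ := ((A * B).trace).re

lemma tpair_smul_left (c : ℝ) (A B : Mat d) : tpair (c • A) B = c * tpair A B := by
  simp [tpair, Matrix.smul_mul, Matrix.trace_smul, Complex.real_smul]

lemma tpair_add_left (A A' B : Mat d) : tpair (A + A') B = tpair A B + tpair A' B := by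
  simp [tpair, Matrix.add_mul, Matrix.trace_add]

lemma tpair_one_left (B : Mat d) : tpair 1 B = B.trace.re := by simp [tpair]

lemma tpair_sum_smul_right {ι : Type*} [Fintype ι] (A : Mat d) (c : ι → ℝ) (M : ι → Mat d) :
    tpair A (∑ z, c z • M z) = ∑ z, c z * tpair A (M z) := by
  simp only [tpair, Matrix.mul_sum, Matrix.trace_sum, Complex.re_sum]
  refine Finset.sum_congr rfl fun z _ => ?_
  rw [Matrix.mul_smul, Matrix.trace_smul, Complex.real_smul]
  simp

-- real smul is complex smul
lemma real_smul_mat (c : ℝ) (A : Mat d) : c • A = (c : ℂ) • A := by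
  ext i j; simp [Complex.real_smul]

lemma psd_rsmul {A : Mat d} (hA : A.PosSemidef) {c : ℝ} (hc : 0 ≤ c) :
    (c • A).PosSemidef := by
  rw [real_smul_mat]
  refine Matrix.posSemidef_iff_dotProduct_mulVec.mpr ⟨?_, ?_⟩
  · rw [Matrix.IsHermitian, Matrix.conjTranspose_smul, hA.1]
    congr 1
    simp
  · intro x
    rw [Matrix.smul_mulVec, dotProduct_smul, smul_eq_mul]
    exact mul_nonneg (by exact_mod_cast Complex.zero_le_real.2 hc) (hA.dotProduct_mulVec_nonneg x)

lemma psd_add {A B : Mat d} (hA : A.PosSemidef) (hB : B.PosSemidef) : (A + B).PosSemidef := by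
  refine Matrix.posSemidef_iff_dotProduct_mulVec.mpr ⟨?_, ?_⟩
  · exact hA.1.add hB.1
  · intro x
    rw [Matrix.add_mulVec, dotProduct_add]
    exact add_nonneg (hA.dotProduct_mulVec_nonneg x) (hB.dotProduct_mulVec_nonneg x)

lemma psd_sum {ι : Type*} [DecidableEq ι] (s : Finset ι) (f : ι → Mat d) (h : ∀ i ∈ s, (f i).PosSemidef) :
    (∑ i ∈ s, f i).PosSemidef := by
  induction s using Finset.induction_on with
  | empty => simpa using Matrix.PosSemidef.zero
  | insert _ _ hx ih =>
    rw [Finset.sum_insert hx]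
    exact psd_add (h _ (Finset.mem_insert_self _ _))
      (ih fun i hi => h i (Finset.mem_insert_of_mem hi))

end Aux

section CollMap
open Finset

variable {d : ℕ} {Y T : Type} [Fintype Y] [Fintype T] [DecidableEq Y] [DecidableEq T]

/-- The collection induced by a measurement indexed by functions `T → Y`. -/
def collMap (M : (T → Y) → Mat d) : T → Y → Mat d :=
  fun t y => ∑ φ, (if y = φ t then (1:ℝ) else 0) • M φ

lemma isCompatible_collMap (M : (T → Y) → Mat d) (hM : IsMeasurement M) :
    IsCompatible (collMap M) := by
  classical
  let e : (T → Y) ≃ Fin (Fintype.card (T → Y)) := Fintype.equivFin _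
  refine ⟨Fintype.card (T → Y), fun z => M (e.symm z),
    fun t y z => if y = (e.symm z) t then 1 else 0, ⟨fun z => hM.1 _, ?_⟩,
    ⟨fun t y z => by positivity, fun t z => by simp⟩, ?_⟩
  · rw [← hM.2]
    exact Fintype.sum_equiv e.symm _ _ fun z => rfl
  · intro t y
    rw [collMap]
    exact (Fintype.sum_equiv e.symm _ _ fun z => rfl).symm

lemma key_sum_prod {n : ℕ} (ν : T → Y → Fin n → ℝ) (hν : IsPostProc ν)
    (t : T) (y : Y) (z : Fin n) :
    (∑ φ : T → Y, (if y = φ t then (1:ℝ) else 0) * ∏ t', ν t' (φ t') z) = ν t y z := by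
  classical
  set g : T → Y → ℝ := fun t' y' =>
    if t' = t then (if y' = y then ν t y z else 0) else ν t' y' z with hg
  have h1 : ∀ φ : T → Y,
      (if y = φ t then (1:ℝ) else 0) * ∏ t', ν t' (φ t') z = ∏ t', g t' (φ t') := by
    intro φ
    rw [← Finset.prod_erase_mul Finset.univ _ (Finset.mem_univ t),
        ← Finset.prod_erase_mul (f := fun t' => g t' (φ t')) Finset.univ (Finset.mem_univ t)]
    have h2 : ∀ t' ∈ Finset.univ.erase t, g t' (φ t') = ν t' (φ t') z := by
      intro t' ht'
      simp only [hg]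
      rw [if_neg (Finset.ne_of_mem_erase ht')]
    rw [Finset.prod_congr rfl h2]
    have h3 : g t (φ t) = if φ t = y then ν t y z else 0 := by simp [hg]
    rw [h3]
    by_cases hy : y = φ t
    · subst hy; simp
    · rw [if_neg hy, if_neg (fun h => hy h.symm)]
      ring
  calc (∑ φ : T → Y, (if y = φ t then (1:ℝ) else 0) * ∏ t', ν t' (φ t') z)
      = ∑ φ : T → Y, ∏ t', g t' (φ t') := Finset.sum_congr rfl fun φ _ => h1 φ
    _ = ∏ t', ∑ y', g t' y' := (Fintype.prod_sum g).symm
    _ = ν t y z := by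
        rw [← Finset.prod_erase_mul _ _ (Finset.mem_univ t)]
        have h4 : ∀ t' ∈ Finset.univ.erase t, (∑ y', g t' y') = 1 := by
          intro t' ht'
          have : ∀ y', g t' y' = ν t' y' z := fun y' => by
            simp only [hg]; rw [if_neg (Finset.ne_of_mem_erase ht')]
          simp only [this]
          exact hν.2 t' z
        rw [Finset.prod_congr rfl h4, Finset.prod_const_one, one_mul]
        have : ∀ y', g t y' = if y' = y then ν t y z else 0 := fun y' => by simp [hg]
        simp only [this]
        simp

lemma exists_collMap_of_data {n : ℕ} (M : Fin n → Mat d) (ν : T → Y → Fin n → ℝ)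
    (hM : IsMeasurement M) (hν : IsPostProc ν) :
    ∃ M' : (T → Y) → Mat d, IsMeasurement M' ∧
      ∀ t y, (∑ z, ν t y z • M z) = collMap M' t y := by
  classical
  refine ⟨fun φ => ∑ z, (∏ t, ν t (φ t) z) • M z, ⟨?_, ?_⟩, ?_⟩
  · intro φ
    exact psd_sum _ _ fun z _ =>
      psd_rsmul (hM.1 z) (Finset.prod_nonneg fun t _ => hν.1 t (φ t) z)
  · rw [Finset.sum_comm]
    calc (∑ z, ∑ φ : T → Y, (∏ t, ν t (φ t) z) • M z)
        = ∑ z, (∑ φ : T → Y, ∏ t, ν t (φ t) z) • M z := by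
          simp [Finset.sum_smul]
      _ = ∑ z, M z := by
          refine Finset.sum_congr rfl fun z _ => ?_
          rw [← Fintype.prod_sum (fun t y => ν t y z)]
          simp [hν.2, one_smul]
      _ = 1 := hM.2
  · intro t y
    rw [collMap]
    have hswap : (∑ φ : T → Y, (if y = φ t then (1:ℝ) else 0) •
        ∑ z, (∏ t', ν t' (φ t') z) • M z)
        = ∑ z, (∑ φ : T → Y, (if y = φ t then (1:ℝ) else 0) * ∏ t', ν t' (φ t') z) • M z := by
      simp_rw [Finset.smul_sum, smul_smul, Finset.sum_smul]
      rw [Finset.sum_comm]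
    rw [hswap]
    refine (Finset.sum_congr rfl fun z _ => ?_)
    rw [key_sum_prod ν hν t y z]

end CollMap

section Repr
open Finset Matrix

variable {d : ℕ}

lemma trace_mul_stdBasisMatrix (F : Mat d) (k i : Fin d) (z : ℂ) :
    (F * Matrix.single k i z).trace = F i k * z := by
  classical
  simp only [Matrix.trace, Matrix.diag, Matrix.mul_apply, Matrix.single]
  rw [Finset.sum_comm]
  simp [Finset.sum_ite_eq, mul_comm, ite_and]

lemma stdBasisMatrix_decomp (k i : Fin d) (z : ℂ) :
    Matrix.single k i z
      = z.re • Matrix.single k i 1 + z.im • Matrix.single k i Complex.I := by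
  ext a b
  by_cases h : k = a ∧ i = b
  · simp only [Matrix.single, Matrix.add_apply, Matrix.smul_apply, h, and_self, if_true,
      Matrix.of_apply, Complex.real_smul]
    rw [mul_one]
    exact (Complex.re_add_im z).symm
  · simp [Matrix.single, h]

lemma exists_trace_repr (g : Mat d →ₗ[ℝ] ℝ) :
    ∃ F : Mat d, ∀ A, g A = ((F * A).trace).re := by
  classical
  refine ⟨fun i k => (g (Matrix.single k i 1) : ℂ)
      - (g (Matrix.single k i Complex.I) : ℂ) * Complex.I, fun A => ?_⟩
  conv_lhs => rw [matrix_eq_sum_single A]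
  rw [map_sum]
  conv_rhs => rw [matrix_eq_sum_single A]
  rw [Matrix.mul_sum (M := (fun i k => (g (Matrix.single k i 1) : ℂ)
      - (g (Matrix.single k i Complex.I) : ℂ) * Complex.I : Mat d)), Matrix.trace_sum, Complex.re_sum]
  refine Finset.sum_congr rfl fun k _ => ?_
  rw [map_sum, Matrix.mul_sum (M := (fun i k => (g (Matrix.single k i 1) : ℂ)
      - (g (Matrix.single k i Complex.I) : ℂ) * Complex.I : Mat d)), Matrix.trace_sum, Complex.re_sum]
  refine Finset.sum_congr rfl fun i _ => ?_
  rw [trace_mul_stdBasisMatrix (F := (fun i k => (g (Matrix.single k i 1) : ℂ)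
      - (g (Matrix.single k i Complex.I) : ℂ) * Complex.I : Mat d))]
  rw [stdBasisMatrix_decomp k i (A k i), map_add, _root_.map_smul, _root_.map_smul]
  simp only [smul_eq_mul]
  set a := g (Matrix.single k i 1)
  set b := g (Matrix.single k i Complex.I)
  simp [Complex.sub_re, Complex.mul_re, Complex.mul_im]
  ring

lemma re_trace_conj_herm (F A : Mat d) (hA : A.IsHermitian) :
    ((Fᴴ * A).trace).re = ((F * A).trace).re := by
  have h1 : (Fᴴ * A).trace = ((A * F)ᴴ).trace := by
    rw [Matrix.conjTranspose_mul, hA.eq]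
  rw [h1, Matrix.trace_conjTranspose, Matrix.trace_mul_comm]
  exact Complex.conj_re _

end Repr

section Shift
open Finset Matrix

variable {d : ℕ}

lemma quad_eval (A : Mat d) (x : Fin d → ℂ) :
    dotProduct (star x) (A *ᵥ x) = ∑ i, ∑ j, (starRingEnd ℂ) (x i) * A i j * x j := by
  simp [dotProduct, Matrix.mulVec, Finset.mul_sum, mul_assoc]

lemma herm_quad_real {A : Mat d} (hA : A.IsHermitian) (x : Fin d → ℂ) :
    (dotProduct (star x) (A *ᵥ x)).im = 0 := by
  rw [← Complex.conj_eq_iff_im, quad_eval]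
  rw [map_sum]
  rw [Finset.sum_comm]
  refine Finset.sum_congr rfl fun j _ => ?_
  rw [map_sum]
  refine Finset.sum_congr rfl fun i _ => ?_
  have hco : (starRingEnd ℂ) (A j i) = A i j := by
    have := congrArg (fun M => M i j) hA.eq
    simpa [Matrix.conjTranspose_apply] using this
  simp only [RingHom.map_mul, Complex.conj_conj]
  rw [hco]
  ring

lemma dot_self_eq (x : Fin d → ℂ) :
    dotProduct (star x) x = ((∑ i, Complex.normSq (x i) : ℝ) : ℂ) := by
  simp only [dotProduct, Pi.star_apply, Complex.ofReal_sum]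
  refine Finset.sum_congr rfl fun i _ => ?_
  exact (Complex.normSq_eq_conj_mul_self).symm

lemma shift_psd {H : Mat d} (hH : H.IsHermitian) {lam : ℝ}
    (hl : (∑ i, ∑ j, ‖H i j‖) ≤ lam) : (H + lam • (1 : Mat d)).PosSemidef := by
  have hsm : (lam • (1 : Mat d)) = (lam : ℂ) • (1 : Mat d) := real_smul_mat _ _
  have hlam0 : 0 ≤ lam :=
    le_trans (Finset.sum_nonneg fun i _ => Finset.sum_nonneg fun j _ => norm_nonneg _) hl
  refine Matrix.posSemidef_iff_dotProduct_mulVec.mpr ⟨?_, ?_⟩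
  · rw [Matrix.IsHermitian, Matrix.conjTranspose_add, hH.eq, hsm, Matrix.conjTranspose_smul,
      Matrix.conjTranspose_one]
    congr 1
    simp
  · intro x
    set S : ℝ := ∑ i, Complex.normSq (x i) with hS
    have hS0 : 0 ≤ S := Finset.sum_nonneg fun i _ => Complex.normSq_nonneg _
    have hterm : ∀ i, Complex.normSq (x i) ≤ S := fun i =>
      Finset.single_le_sum (f := fun i => Complex.normSq (x i))
        (fun i _ => Complex.normSq_nonneg _) (Finset.mem_univ i)
    have hId : dotProduct (star x) ((lam • (1 : Mat d)) *ᵥ x) = ((lam * S : ℝ) : ℂ) := by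
      rw [hsm, Matrix.smul_mulVec, Matrix.one_mulVec, dotProduct_smul,
        dot_self_eq, smul_eq_mul]
      rw [hS]
      push_cast
      ring
    rw [Matrix.add_mulVec, dotProduct_add, hId]
    have him : (dotProduct (star x) (H *ᵥ x)).im = 0 := herm_quad_real hH x
    have hre : -((∑ i, ∑ j, ‖H i j‖) * S)
        ≤ (dotProduct (star x) (H *ᵥ x)).re := by
      rw [quad_eval]
      have habs : ∀ i j, |((starRingEnd ℂ) (x i) * H i j * x j).re|
          ≤ ‖H i j‖ * S := by
        intro i j
        refine le_trans (Complex.abs_re_le_norm _) ?_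
        rw [norm_mul, norm_mul, Complex.norm_conj]
        have hxx : ‖x i‖ * ‖x j‖ ≤ S := by
          nlinarith [hterm i, hterm j, Complex.sq_norm (x i), Complex.sq_norm (x j),
            norm_nonneg (x i), norm_nonneg (x j), sq_nonneg
            (‖x i‖ - ‖x j‖)]
        calc ‖x i‖ * ‖H i j‖ * ‖x j‖
            = ‖H i j‖ * (‖x i‖ * ‖x j‖) := by ring
          _ ≤ ‖H i j‖ * S :=
              mul_le_mul_of_nonneg_left hxx (norm_nonneg _)
      have h1 : |(∑ i, ∑ j, (starRingEnd ℂ) (x i) * H i j * x j).re|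
          ≤ ∑ i, ∑ j, ‖H i j‖ * S := by
        rw [Complex.re_sum]
        refine le_trans (Finset.abs_sum_le_sum_abs _ _) (Finset.sum_le_sum fun i _ => ?_)
        rw [Complex.re_sum]
        exact le_trans (Finset.abs_sum_le_sum_abs _ _) (Finset.sum_le_sum fun j _ => habs i j)
      have h2 : (∑ i, ∑ j, ‖H i j‖ * S) = (∑ i, ∑ j, ‖H i j‖) * S := by
        rw [Finset.sum_mul]
        exact Finset.sum_congr rfl fun i _ => (Finset.sum_mul _ _ _).symm
      rw [h2] at h1
      linarith [(abs_le.mp h1).1]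
    rw [Complex.le_def]
    constructor
    · simp only [Complex.add_re, Complex.ofReal_re, Complex.zero_re]
      have : -(lam * S) ≤ (dotProduct (star x) (H *ᵥ x)).re := by
        refine le_trans ?_ hre
        have := mul_le_mul_of_nonneg_right hl hS0
        linarith
      linarith
    · simp [him]

end Shift

section EntryBound
open Finset Matrix

variable {d : ℕ}

lemma star_single (k : Fin d) (c : ℂ) :
    star (Pi.single k c : Fin d → ℂ) = (Pi.single k (starRingEnd ℂ c) : Fin d → ℂ) := by
  ext m; simp [Pi.single_apply, apply_ite (starRingEnd ℂ)]

lemma quad_single (A : Mat d) (k : Fin d) :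
    dotProduct (star (Pi.single k (1:ℂ))) (A *ᵥ Pi.single k 1) = A k k := by
  rw [star_single, Matrix.mulVec_single, single_dotProduct]
  simp

lemma psd_diag_bounds {A : Mat d} (hA : A.PosSemidef) (hA' : ((1 : Mat d) - A).PosSemidef)
    (k : Fin d) : A k k = ((A k k).re : ℂ) ∧ 0 ≤ (A k k).re ∧ (A k k).re ≤ 1 := by
  have h1 := hA.dotProduct_mulVec_nonneg (Pi.single k 1)
  rw [quad_single] at h1
  have h2 := hA'.dotProduct_mulVec_nonneg (Pi.single k 1)
  rw [quad_single] at h2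
  have h2' : ((1 : Mat d) - A) k k = 1 - A k k := by
    simp [Matrix.sub_apply, Matrix.one_apply]
  rw [h2'] at h2
  rw [Complex.le_def] at h1 h2
  simp only [Complex.zero_re, Complex.zero_im, Complex.sub_re, Complex.sub_im, Complex.one_re,
    Complex.one_im] at h1 h2
  refine ⟨?_, h1.1, by linarith [h2.1]⟩
  have him : (A k k).im = 0 := h1.2.symm
  rw [← Complex.re_add_im (A k k), him]
  simp

lemma psd_entry_abs_le_one {A : Mat d} (hA : A.PosSemidef) (hA' : ((1 : Mat d) - A).PosSemidef)
    (i j : Fin d) : ‖A i j‖ ≤ 1 := by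
  classical
  by_cases hij : i = j
  · subst hij
    obtain ⟨he, h0, h1⟩ := psd_diag_bounds hA hA' i
    rw [he]
    simp only [Complex.norm_real, Real.norm_eq_abs]
    rw [abs_of_nonneg h0]; exact h1
  by_cases hu : A i j = 0
  · simp [hu]
  set u : ℂ := A i j with hudef
  set r : ℝ := ‖u‖ with hrdef
  have hr0 : 0 < r := by
    rw [hrdef]
    exact norm_pos_iff.mpr hu
  have hrne : ((r : ℂ)) ≠ 0 := by
    exact_mod_cast ne_of_gt hr0
  set a : ℂ := -u / (r : ℂ) with ha
  set x : Fin d → ℂ := a • (Pi.single i 1 : Fin d → ℂ) + (Pi.single j 1 : Fin d → ℂ) with hxdef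
  have hji : A j i = (starRingEnd ℂ) u := by
    have := congrArg (fun M => M j i) hA.1.eq
    simpa [Matrix.conjTranspose_apply, hudef] using this.symm
  have hmc : u * (starRingEnd ℂ) u = ((r^2 : ℝ) : ℂ) := by
    rw [Complex.mul_conj]
    norm_cast
    rw [hrdef, Complex.sq_norm]
  have hexp : dotProduct (star x) (A *ᵥ x)
      = (starRingEnd ℂ) a * a * A i i + (starRingEnd ℂ) a * A i j + a * A j i + A j j := by
    rw [hxdef, star_add, star_smul, star_single, star_single, Matrix.mulVec_add,
      Matrix.mulVec_smul, Matrix.mulVec_single, Matrix.mulVec_single]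
    simp only [_root_.map_one, add_dotProduct, smul_dotProduct,
      dotProduct_add, dotProduct_smul, single_dotProduct, smul_eq_mul,
      mul_one, Complex.star_def, MulOpposite.op_one, one_smul, Matrix.col_apply]
    ring
  have hca : (starRingEnd ℂ) a = -(starRingEnd ℂ) u / (r : ℂ) := by
    rw [ha, map_div₀]
    simp
  have hval : dotProduct (star x) (A *ᵥ x) = A i i + A j j - 2 * (r : ℂ) := by
    rw [hexp, hca, ha, hji, ← hudef]
    field_simp
    ring_nf
    rw [mul_comm ((starRingEnd ℂ) u) u, hmc]
    push_cast
    ring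
  have hq := hA.dotProduct_mulVec_nonneg x
  rw [hval, Complex.le_def] at hq
  simp only [Complex.zero_re, Complex.sub_re, Complex.add_re, Complex.mul_re,
    Complex.ofReal_re, Complex.ofReal_im] at hq
  have hii := psd_diag_bounds hA hA' i
  have hjj := psd_diag_bounds hA hA' j
  have : 2 * r ≤ (A i i).re + (A j j).re := by
    have := hq.1
    norm_num at this ⊢
    linarith
  rw [← hrdef] at *
  linarith [hii.2.2, hjj.2.2]
end EntryBound

section Topo
open Finset Matrix Set

attribute [local instance] Matrix.normedAddCommGroup Matrix.normedSpace

variable {d : ℕ}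

noncomputable instance matFD : FiniteDimensional ℝ (Mat d) :=
  Module.Finite.trans ℂ (Mat d)

/-- conjTranspose minus id, as a real linear map -/
noncomputable def ctSub : Mat d →ₗ[ℝ] Mat d where
  toFun A := Aᴴ - A
  map_add' A B := by
    show (A + B)ᴴ - (A + B) = _
    rw [Matrix.conjTranspose_add]; abel
  map_smul' r A := by
    show (r • A)ᴴ - r • A = _
    ext i j
    simp only [Matrix.sub_apply, Matrix.conjTranspose_apply, Matrix.smul_apply,
      RingHom.id_apply, star_smul, star_trivial]
    rw [Complex.real_smul, Complex.real_smul, Complex.real_smul]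
    ring

/-- quadratic form at x, as a real linear map in A -/
noncomputable def quadL (x : Fin d → ℂ) : Mat d →ₗ[ℝ] ℂ where
  toFun A := dotProduct (star x) (A *ᵥ x)
  map_add' A B := by
    show star x ⬝ᵥ (A + B) *ᵥ x = _
    rw [Matrix.add_mulVec, dotProduct_add]
  map_smul' r A := by
    show star x ⬝ᵥ (r • A) *ᵥ x = _
    rw [real_smul_mat, Matrix.smul_mulVec, dotProduct_smul]
    simp [Complex.real_smul]

lemma isClosed_nonneg_complex : IsClosed {z : ℂ | 0 ≤ z} := by
  have : {z : ℂ | 0 ≤ z} = Complex.re ⁻¹' (Set.Ici 0) ∩ Complex.im ⁻¹' {0} := by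
    ext z
    simp [Complex.le_def, eq_comm]
  rw [this]
  exact (isClosed_Ici.preimage Complex.continuous_re).inter
    (isClosed_singleton.preimage Complex.continuous_im)

lemma isClosed_psd : IsClosed {A : Mat d | A.PosSemidef} := by
  have he : {A : Mat d | A.PosSemidef}
      = (ctSub ⁻¹' {0}) ∩ ⋂ x : Fin d → ℂ, (quadL x) ⁻¹' {z | 0 ≤ z} := by
    ext A
    simp only [Set.mem_setOf_eq, Set.mem_inter_iff, Set.mem_preimage, Set.mem_singleton_iff,
      Set.mem_iInter, Matrix.posSemidef_iff_dotProduct_mulVec, Matrix.IsHermitian]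
    constructor
    · rintro ⟨h1, h2⟩
      exact ⟨by simp [ctSub, h1], fun x => h2 x⟩
    · rintro ⟨h1, h2⟩
      refine ⟨?_, fun x => h2 x⟩
      have : Aᴴ - A = 0 := h1
      rw [sub_eq_zero] at this
      exact this
  rw [he]
  refine IsClosed.inter (isClosed_singleton.preimage ctSub.continuous_of_finiteDimensional) ?_
  exact isClosed_iInter fun x =>
    isClosed_nonneg_complex.preimage (quadL x).continuous_of_finiteDimensional

variable {Z : Type} [Fintype Z] [DecidableEq Z]

lemma isClosed_meas : IsClosed {M : Z → Mat d | IsMeasurement M} := by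
  have he : {M : Z → Mat d | IsMeasurement M}
      = (⋂ z : Z, (fun M : Z → Mat d => M z) ⁻¹' {A | A.PosSemidef})
        ∩ (fun M : Z → Mat d => ∑ z, M z) ⁻¹' {1} := by
    ext M
    simp [IsMeasurement, forall_and]
  rw [he]
  refine IsClosed.inter (isClosed_iInter fun z => isClosed_psd.preimage (continuous_apply z)) ?_
  exact isClosed_singleton.preimage (by continuity)

lemma meas_norm_le {M : Z → Mat d} (hM : IsMeasurement M) : ‖M‖ ≤ 1 := by
  rw [pi_norm_le_iff_of_nonneg zero_le_one]
  intro z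
  rw [Matrix.norm_le_iff zero_le_one]
  intro i j
  refine psd_entry_abs_le_one (hM.1 z) ?_ i j
  have hsub : (1 : Mat d) - M z = ∑ w ∈ Finset.univ.erase z, M w := by
    rw [Finset.sum_erase_eq_sub (Finset.mem_univ z), hM.2]
  rw [hsub]
  exact psd_sum _ _ fun w _ => hM.1 w

lemma isCompact_meas : IsCompact {M : Z → Mat d | IsMeasurement M} := by
  refine Metric.isCompact_of_isClosed_isBounded isClosed_meas ?_
  refine (Metric.isBounded_closedBall (x := (0 : Z → Mat d)) (r := 1)).subset ?_
  intro M hM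
  rw [Metric.mem_closedBall, dist_zero_right]
  exact meas_norm_le hM

lemma convex_meas : Convex ℝ {M : Z → Mat d | IsMeasurement M} := by
  rintro M hM M' hM' a b ha hb hab
  constructor
  · intro z
    have : (a • M + b • M') z = a • M z + b • M' z := rfl
    rw [this]
    exact psd_add (psd_rsmul (hM.1 z) ha) (psd_rsmul (hM'.1 z) hb)
  · have : (∑ z, (a • M + b • M') z) = a • (∑ z, M z) + b • (∑ z, M' z) := by
      rw [Finset.smul_sum, Finset.smul_sum, ← Finset.sum_add_distrib]
      rfl
    rw [this, hM.2, hM'.2, ← add_smul, hab, one_smul]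

end Topo

section Sep
open Finset Matrix Set

attribute [local instance] Matrix.normedAddCommGroup Matrix.normedSpace

variable {d : ℕ} {Y T : Type} [Fintype Y] [Fintype T] [DecidableEq Y] [DecidableEq T]

noncomputable def collMapL : ((T → Y) → Mat d) →ₗ[ℝ] (T → Y → Mat d) where
  toFun := collMap
  map_add' M M' := by
    funext t y
    show (∑ φ, (if y = φ t then (1:ℝ) else 0) • (M φ + M' φ)) = _
    rw [Finset.sum_congr rfl fun φ _ => smul_add _ (M φ) (M' φ), Finset.sum_add_distrib]
    rfl
  map_smul' c M := by
    funext t y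
    show (∑ φ, (if y = φ t then (1:ℝ) else 0) • (c • M φ)) = _
    rw [Finset.sum_congr rfl fun φ _ => smul_comm _ c (M φ), ← Finset.smul_sum]
    rfl

lemma separation {N : T → Y → Mat d} (hinc : ¬ IsCompatible N) :
    ∃ (f : (T → Y → Mat d) →L[ℝ] ℝ) (u : ℝ),
      (∀ (n : ℕ) (M : Fin n → Mat d) (ν : T → Y → Fin n → ℝ),
        IsMeasurement M → IsPostProc ν →
          f (fun t y => ∑ z, ν t y z • M z) < u) ∧ u < f N := by
  classical
  set K : Set (T → Y → Mat d) :=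
    collMapL '' {M : (T → Y) → Mat d | IsMeasurement M} with hK
  have hKconv : Convex ℝ K := convex_meas.linear_image collMapL
  have hKcomp : IsCompact K :=
    isCompact_meas.image collMapL.continuous_of_finiteDimensional
  have hNK : N ∉ K := by
    rintro ⟨M, hM, hEq⟩
    exact hinc (hEq ▸ isCompatible_collMap M hM)
  haveI : LocallyConvexSpace ℝ (T → Y → Mat d) := NormedSpace.toLocallyConvexSpace (E := T → Y → Mat d)
  obtain ⟨f, u, hfu, hfN⟩ :=
    geometric_hahn_banach_closed_point hKconv hKcomp.isClosed hNK
  refine ⟨f, u, fun n M ν hM hν => ?_, hfN⟩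
  obtain ⟨M', hM', hEq⟩ := exists_collMap_of_data M ν hM hν
  have : (fun t y => ∑ z, ν t y z • M z) = collMapL M' := by
    funext t y
    exact hEq t y
  rw [this]
  exact hfu _ ⟨M', hM', rfl⟩

end Sep

section Main
open Finset Matrix Set

attribute [local instance] Matrix.normedAddCommGroup Matrix.normedSpace

variable {d : ℕ} {Y T : Type} [Fintype Y] [Fintype T] [DecidableEq Y] [DecidableEq T]

noncomputable def insL (t : T) (y : Y) : Mat d →ₗ[ℝ] (T → Y → Mat d) :=
  (LinearMap.single ℝ (fun _ : T => Y → Mat d) t).comp (LinearMap.single ℝ (fun _ : Y => Mat d) y)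

lemma f_decomp (f : (T → Y → Mat d) →L[ℝ] ℝ) (A : T → Y → Mat d) :
    f A = ∑ t, ∑ y, f (insL t y (A t y)) := by
  have h1 : A = ∑ t, ∑ y, insL t y (A t y) := by
    have ha : A = ∑ t, Pi.single t (A t) := (Finset.univ_sum_single A).symm
    have hb : ∀ t : T, A t = ∑ y, Pi.single y (A t y) := fun t =>
      (Finset.univ_sum_single (A t)).symm
    calc A = ∑ t, Pi.single t (A t) := ha
      _ = ∑ t, Pi.single t (∑ y, (Pi.single y (A t y) : Y → Mat d)) := by
          exact Finset.sum_congr rfl fun t _ => by rw [← hb t]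
      _ = ∑ t, ∑ y, insL t y (A t y) := by
          refine Finset.sum_congr rfl fun t _ => ?_
          exact map_sum (LinearMap.single ℝ (fun _ : T => Y → Mat d) t) _ _
  conv_lhs => rw [h1]
  rw [map_sum]
  exact Finset.sum_congr rfl fun t _ => by rw [map_sum]

lemma herm_trace_real {A : Mat d} (hA : A.IsHermitian) : A.trace = ((A.trace.re : ℝ) : ℂ) := by
  have h := congrArg Matrix.trace hA.eq
  rw [Matrix.trace_conjTranspose] at h
  exact (Complex.conj_eq_iff_re.mp h).symm

theorem main [Nonempty Y] [Nonempty T] (hd : 0 < d)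
    (N : T → Y → Mat d) (hN : ∀ t, IsMeasurement (N t)) (hinc : ¬ IsCompatible N) :
    ∃ E : Y × T → Mat d, IsStateEnsemble E ∧
      Eprior (fun x y => if x.1 = y then (1 : ℝ) else 0)
          (fun t x => if x.2 = t then (1 : ℝ) else 0) E N
        > EpostMax (fun x y => if x.1 = y then (1 : ℝ) else 0)
            (fun t x => if x.2 = t then (1 : ℝ) else 0) E := by
  classical
  obtain ⟨f, u, hsep, hfN⟩ := separation hinc
  choose F hF using fun (t : T) (y : Y) =>
    exists_trace_repr (f.toLinearMap.comp (insL (d := d) t y))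
  obtain ⟨H, hHdef⟩ : ∃ H : T → Y → Mat d,
      H = fun t y => (2⁻¹ : ℝ) • (F t y + (F t y)ᴴ) := ⟨_, rfl⟩
  have hHherm : ∀ t y, (H t y).IsHermitian := by
    intro t y
    rw [Matrix.IsHermitian, hHdef]
    show ((2⁻¹ : ℝ) • (F t y + (F t y)ᴴ))ᴴ = (2⁻¹ : ℝ) • (F t y + (F t y)ᴴ)
    rw [real_smul_mat, Matrix.conjTranspose_smul, Matrix.conjTranspose_add,
      Matrix.conjTranspose_conjTranspose]
    rw [add_comm]
    congr 1
    simp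
  have hHrepr : ∀ t y (A : Mat d), A.IsHermitian → tpair (H t y) A = f (insL t y A) := by
    intro t y A hA
    rw [hHdef]
    show tpair ((2⁻¹ : ℝ) • (F t y + (F t y)ᴴ)) A = _
    rw [tpair_smul_left, tpair_add_left]
    have h2 : tpair ((F t y)ᴴ) A = tpair (F t y) A := re_trace_conj_herm _ _ hA
    rw [h2]
    have h3 : f (insL t y A) = ((F t y * A).trace).re := hF t y A
    rw [h3]
    show 2⁻¹ * (((F t y * A).trace.re) + ((F t y * A).trace.re)) = (F t y * A).trace.re
    ring
  have Pkey : ∀ A : T → Y → Mat d, (∀ t y, (A t y).IsHermitian) →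
      (∑ t, ∑ y, tpair (H t y) (A t y)) = f A := by
    intro A hA
    rw [f_decomp f A]
    exact Finset.sum_congr rfl fun t _ => Finset.sum_congr rfl fun y _ =>
      hHrepr t y (A t y) (hA t y)
  set lam : ℝ := (∑ t, ∑ y, ∑ i, ∑ j, ‖H t y i j‖) + 1 with hlamdef
  have habs_nonneg : ∀ t y, 0 ≤ ∑ i, ∑ j, ‖H t y i j‖ := fun t y =>
    Finset.sum_nonneg fun i _ => Finset.sum_nonneg fun j _ => norm_nonneg _
  have hlam_ty : ∀ t y, (∑ i, ∑ j, ‖H t y i j‖) ≤ lam - 1 := by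
    intro t y
    rw [hlamdef, add_sub_cancel_right]
    calc (∑ i, ∑ j, ‖H t y i j‖)
        ≤ ∑ y, ∑ i, ∑ j, ‖H t y i j‖ :=
          Finset.single_le_sum (fun y _ => habs_nonneg t y) (Finset.mem_univ y)
      _ ≤ ∑ t, ∑ y, ∑ i, ∑ j, ‖H t y i j‖ :=
          Finset.single_le_sum
            (fun t _ => Finset.sum_nonneg fun y _ => habs_nonneg t y) (Finset.mem_univ t)
  have hlam1 : (1:ℝ) ≤ lam := by
    rw [hlamdef]
    nlinarith [Finset.sum_nonneg (fun t (_ : t ∈ Finset.univ) =>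
      Finset.sum_nonneg fun y (_ : y ∈ Finset.univ) => habs_nonneg t y)]
  have hPSD : ∀ t y, (H t y + lam • (1 : Mat d)).PosSemidef := fun t y =>
    shift_psd (hHherm t y) (le_trans (hlam_ty t y) (by linarith))
  -- trace bound
  have htrlb : ∀ t y, -(lam - 1) ≤ (H t y).trace.re := by
    intro t y
    have h1 : |(H t y).trace.re| ≤ ∑ i, ∑ j, ‖H t y i j‖ := by
      rw [Matrix.trace]
      have : ((∑ i, (H t y).diag i).re) = ∑ i, ((H t y) i i).re := by
        rw [Complex.re_sum]; rfl
      rw [this]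
      refine le_trans (Finset.abs_sum_le_sum_abs _ _) ?_
      refine Finset.sum_le_sum fun i _ => ?_
      refine le_trans (Complex.abs_re_le_norm _) ?_
      exact Finset.single_le_sum (f := fun j => ‖H t y i j‖)
        (fun j _ => norm_nonneg _) (Finset.mem_univ i)
    exact (abs_le.mp (le_trans h1 (hlam_ty t y))).1
  set S : ℝ := ∑ t, ∑ y, ((H t y).trace.re + lam * d) with hSdef
  have hd1 : (1:ℝ) ≤ (d:ℝ) := by exact_mod_cast hd
  have hterm1 : ∀ t y, (1:ℝ) ≤ (H t y).trace.re + lam * d := by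
    intro t y
    have hld : lam * 1 ≤ lam * d := by
      refine mul_le_mul_of_nonneg_left hd1 (le_trans zero_le_one hlam1)
    have := htrlb t y
    linarith
  have hS1 : (1:ℝ) ≤ S := by
    obtain ⟨t0⟩ := (inferInstance : Nonempty T)
    obtain ⟨y0⟩ := (inferInstance : Nonempty Y)
    calc (1:ℝ) ≤ (H t0 y0).trace.re + lam * d := hterm1 t0 y0
      _ ≤ ∑ y, ((H t0 y).trace.re + lam * d) :=
          Finset.single_le_sum (fun y _ => le_trans zero_le_one (hterm1 t0 y))
            (Finset.mem_univ y0)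
      _ ≤ S :=
          Finset.single_le_sum
            (fun t _ => Finset.sum_nonneg fun y _ => le_trans zero_le_one (hterm1 t y))
            (Finset.mem_univ t0)
  have hS0 : (0:ℝ) < S := lt_of_lt_of_le one_pos hS1
  obtain ⟨E, hEdef⟩ : ∃ E : Y × T → Mat d,
      E = fun x => S⁻¹ • (H x.2 x.1 + lam • (1 : Mat d)) := ⟨_, rfl⟩
  have hEpsd : ∀ x, (E x).PosSemidef := by
    intro x
    rw [hEdef]
    exact psd_rsmul (hPSD x.2 x.1) (inv_nonneg.mpr hS0.le)
  have htrE : ∀ (t : T) (y : Y), (H t y + lam • (1 : Mat d)).trace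
      = (((H t y).trace.re + lam * d : ℝ) : ℂ) := by
    intro t y
    have hone : Matrix.trace (lam • (1 : Mat d)) = ((lam * d : ℝ) : ℂ) := by
      rw [Matrix.trace_smul, Matrix.trace_one]
      rw [Complex.real_smul]
      push_cast
      simp
    rw [Matrix.trace_add, hone, herm_trace_real (hHherm t y)]
    norm_cast
  have hens : IsStateEnsemble E := by
    refine ⟨hEpsd, ?_⟩
    have h1 : ∀ x : Y × T, (E x).trace
        = ((S⁻¹ * ((H x.2 x.1).trace.re + lam * d) : ℝ) : ℂ) := by
      intro x
      rw [hEdef]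
      show (S⁻¹ • (H x.2 x.1 + lam • (1:Mat d))).trace = _
      rw [Matrix.trace_smul, htrE, Complex.real_smul]
      push_cast
      ring
    rw [Finset.sum_congr rfl fun x _ => h1 x, ← Complex.ofReal_sum]
    have h2 : (∑ x : Y × T, S⁻¹ * ((H x.2 x.1).trace.re + lam * d)) = S⁻¹ * S := by
      rw [← Finset.mul_sum]
      congr 1
      rw [hSdef, Fintype.sum_prod_type]
      exact Finset.sum_comm
    rw [h2, inv_mul_cancel₀ (ne_of_gt hS0)]
    norm_num
  have tpairE : ∀ (t : T) (y : Y) (B : Mat d), tpair (E (y, t)) B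
      = S⁻¹ * (tpair (H t y) B + lam * B.trace.re) := by
    intro t y B
    rw [hEdef]
    show tpair (S⁻¹ • (H t y + lam • 1)) B = _
    rw [tpair_smul_left, tpair_add_left, tpair_smul_left, tpair_one_left]
  have key_eval : ∀ B : T → Y → Mat d, (∀ t y, (B t y).IsHermitian) →
      (∀ t, (∑ y, B t y) = 1) →
      (∑ t, ∑ y, tpair (E (y, t)) (B t y))
        = S⁻¹ * (f B + lam * ((Fintype.card T : ℝ) * d)) := by
    intro B hB1 hB2
    rw [Finset.sum_congr rfl fun t _ => Finset.sum_congr rfl fun y _ => tpairE t y (B t y)]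
    have htr : (∑ t, ∑ y, (B t y).trace.re) = (Fintype.card T : ℝ) * d := by
      have h3 : ∀ t : T, (∑ y, (B t y).trace.re) = (d:ℝ) := by
        intro t
        have h4 : (∑ y, (B t y).trace) = (d : ℂ) := by
          rw [← Matrix.trace_sum, hB2 t, Matrix.trace_one]
          simp
        have h5 := congrArg Complex.re h4
        rw [Complex.re_sum] at h5
        simpa using h5
      rw [Finset.sum_congr rfl fun t _ => h3 t]
      simp [mul_comm]
    have hsplit : ∀ t : T, (∑ y, S⁻¹ * (tpair (H t y) (B t y) + lam * (B t y).trace.re))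
        = S⁻¹ * (∑ y, tpair (H t y) (B t y)) + S⁻¹ * lam * (∑ y, (B t y).trace.re) := by
      intro t
      rw [Finset.mul_sum, Finset.mul_sum, ← Finset.sum_add_distrib]
      refine Finset.sum_congr rfl fun y _ => ?_
      ring
    rw [Finset.sum_congr rfl fun t _ => hsplit t, Finset.sum_add_distrib,
      ← Finset.mul_sum, ← Finset.mul_sum, Pkey B hB1, htr]
    ring
  refine ⟨E, hens, ?_⟩
  have hEprior : Eprior (fun x y => if x.1 = y then (1 : ℝ) else 0)
      (fun t x => if x.2 = t then (1 : ℝ) else 0) E N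
      = ∑ t, ∑ y, tpair (E (y, t)) (N t y) := by
    rw [Eprior, Fintype.sum_prod_type]
    rw [Finset.sum_comm]
    refine Finset.sum_congr rfl fun t _ => Finset.sum_congr rfl fun y _ => ?_
    simp [tpair, ite_mul, one_mul, zero_mul, Finset.sum_ite_eq]
  have hEpriorVal : Eprior (fun x y => if x.1 = y then (1 : ℝ) else 0)
      (fun t x => if x.2 = t then (1 : ℝ) else 0) E N
      = S⁻¹ * (f N + lam * ((Fintype.card T : ℝ) * d)) := by
    rw [hEprior]
    exact key_eval N (fun t y => ((hN t).1 y).1) (fun t => (hN t).2)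
  set Bnd : ℝ := S⁻¹ * (u + lam * ((Fintype.card T : ℝ) * d)) with hBnddef
  have hSinv : (0:ℝ) < S⁻¹ := inv_pos.mpr hS0
  have hpost_lt : ∀ (n : ℕ) (M : Fin n → Mat d) (ν : T → Y → Fin n → ℝ),
      IsMeasurement M → IsPostProc ν →
      Epost (fun x y => if x.1 = y then (1 : ℝ) else 0)
        (fun t x => if x.2 = t then (1 : ℝ) else 0) E M ν < Bnd := by
    intro n M ν hM hν
    set C : T → Y → Mat d := fun t y => ∑ z, ν t y z • M z with hCdef
    have hCpsd : ∀ t y, (C t y).PosSemidef := by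
      intro t y
      exact psd_sum _ _ fun z _ => psd_rsmul (hM.1 z) (hν.1 t y z)
    have hCsum : ∀ t, (∑ y, C t y) = 1 := by
      intro t
      rw [hCdef]
      show (∑ y, ∑ z, ν t y z • M z) = 1
      rw [Finset.sum_comm]
      calc (∑ z, ∑ y, ν t y z • M z) = ∑ z, (∑ y, ν t y z) • M z := by
            refine Finset.sum_congr rfl fun z _ => ?_
            rw [Finset.sum_smul]
        _ = ∑ z, M z := by
            refine Finset.sum_congr rfl fun z _ => ?_
            rw [hν.2 t z, one_smul]
        _ = 1 := hM.2
    have hEpost : Epost (fun x y => if x.1 = y then (1 : ℝ) else 0)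
        (fun t x => if x.2 = t then (1 : ℝ) else 0) E M ν
        = ∑ t, ∑ y, tpair (E (y, t)) (C t y) := by
      rw [Epost, Fintype.sum_prod_type]
      rw [Finset.sum_comm]
      refine Finset.sum_congr rfl fun t _ => Finset.sum_congr rfl fun y _ => ?_
      rw [hCdef]
      show _ = tpair (E (y,t)) (∑ z, ν t y z • M z)
      rw [tpair_sum_smul_right]
      simp [tpair, ite_mul, one_mul, zero_mul, Finset.sum_ite_eq]
    rw [hEpost, key_eval C (fun t y => (hCpsd t y).1) hCsum, hBnddef]
    have hfC : f C < u := hsep n M ν hM hν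
    have : f (fun t y => ∑ z, ν t y z • M z) = f C := rfl
    nlinarith [hfC, hSinv]
  have hnonempty : ∃ p, p ∈ {p : ℝ | ∃ (n : ℕ) (M : Fin n → Mat d) (ν : T → Y → Fin n → ℝ),
      IsMeasurement M ∧ IsPostProc ν ∧ p = Epost (fun x y => if x.1 = y then (1 : ℝ) else 0)
        (fun t x => if x.2 = t then (1 : ℝ) else 0) E M ν} := by
    refine ⟨_, 1, fun _ => (1 : Mat d), fun _ _ _ => (Fintype.card Y : ℝ)⁻¹,
      ⟨fun _ => Matrix.PosSemidef.one, by simp⟩, ⟨fun _ _ _ => by positivity, fun t z => ?_⟩, rfl⟩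
    rw [Finset.sum_const, nsmul_eq_mul, Finset.card_univ]
    rw [mul_inv_cancel₀]
    exact_mod_cast Fintype.card_ne_zero
  have hmax : EpostMax (fun x y => if x.1 = y then (1 : ℝ) else 0)
      (fun t x => if x.2 = t then (1 : ℝ) else 0) E ≤ Bnd := by
    rw [EpostMax]
    refine csSup_le ?_ ?_
    · obtain ⟨p, hp⟩ := hnonempty
      exact ⟨p, hp⟩
    · rintro p ⟨n, M, ν, hM, hν, rfl⟩
      exact le_of_lt (hpost_lt n M ν hM hν)
  have hfin : Bnd < Eprior (fun x y => if x.1 = y then (1 : ℝ) else 0)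
      (fun t x => if x.2 = t then (1 : ℝ) else 0) E N := by
    rw [hEpriorVal, hBnddef]
    have := hfN
    nlinarith [hfN, hSinv]
  exact lt_of_le_of_lt hmax hfin
end Main


theorem stmt12 {d : ℕ} {Y T : Type} [Fintype Y] [Fintype T] [DecidableEq Y] [DecidableEq T]
    (N : T → Y → Mat d) (hN : ∀ t, IsMeasurement (N t))
    (hinc : ¬ IsCompatible N) :
    ∃ E : Y × T → Mat d, IsStateEnsemble E ∧
      Eprior (fun x y => if x.1 = y then (1 : ℝ) else 0)
          (fun t x => if x.2 = t then (1 : ℝ) else 0) E N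
        > EpostMax (fun x y => if x.1 = y then (1 : ℝ) else 0)
            (fun t x => if x.2 = t then (1 : ℝ) else 0) E := by
  classical
  by_cases hT : Nonempty T
  swap
  · exact absurd ⟨1, fun _ => (1 : Mat d), fun _ _ _ => 0,
      ⟨fun _ => Matrix.PosSemidef.one, by simp⟩,
      ⟨fun _ _ _ => le_refl 0, fun t _ => (hT ⟨t⟩).elim⟩, fun t _ => (hT ⟨t⟩).elim⟩ hinc
  by_cases hd : 0 < d
  swap
  · exfalso
    have hd0 : d = 0 := by omega
    subst hd0
    haveI : Subsingleton (Mat 0) := ⟨fun a b => by ext i j; exact i.elim0⟩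
    exact hinc ⟨0, fun z => z.elim0, fun _ _ z => z.elim0,
      ⟨fun z => z.elim0, Subsingleton.elim _ _⟩,
      ⟨fun _ _ z => z.elim0, fun _ z => z.elim0⟩, fun t y => Subsingleton.elim _ _⟩
  by_cases hY : Nonempty Y
  swap
  · exfalso
    obtain ⟨t⟩ := hT
    haveI : IsEmpty Y := not_nonempty_iff.mp hY
    have h2 := (hN t).2
    rw [Finset.univ_eq_empty, Finset.sum_empty] at h2
    have h3 := congrArg (fun M : Mat d => M ⟨0, hd⟩ ⟨0, hd⟩) h2
    simp [Matrix.one_apply] at h3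
  haveI := hT
  haveI := hY
  exact main hd N hN hinc
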